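/- Let X be a lazy random walk on ℤ with holding probability 1/2 and one-step transitions p(x, x+1) = 1/3, p(x, x-1) = 1/6, and let T'₁ be the first hitting time of 1 starting from 0. Then for λ ≤ log(6/(3+2√2)), the Laplace transform φ(λ) := E[e^{λT'₁}] is finite and satisfies φ(λ) = e^λ(1/3 + φ(λ)²/6 + φ(λ)/2), whence φ(λ) = (6e^{-λ} - 3)/2 - √((6e^{-λ}-3)² - 8)/2. -/

import Mathlib

/-- `hitOne t x = P_x[T'₁ = t]` for the lazy walk on `ℤ` with holding probability
`1/2`, `p(x,x+1) = 1/3`, `p(x,x-1) = 1/6`, where `T'₁` is the first hitting time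
of `1`. -/
noncomputable def hitOne : ℕ → ℤ → ℝ
  | 0, x => if x = 1 then 1 else 0
  | (t + 1), x =>
      if x = 1 then 0
      else (1 / 2) * hitOne t x + (1 / 3) * hitOne t (x + 1) + (1 / 6) * hitOne t (x - 1)

open Finset PowerSeries

noncomputable def aw : ℕ → ℝ := fun t => hitOne t 0

noncomputable def Aps : PowerSeries ℝ := PowerSeries.mk aw

lemma hitOne_nonneg : ∀ t x, 0 ≤ hitOne t x := by
  intro t
  induction t with
  | zero => intro x; simp only [hitOne]; positivity
  | succ t ih =>
    intro x
    simp only [hitOne]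
    split
    · norm_num
    · have := ih x; have := ih (x + 1); have := ih (x - 1); positivity

lemma hitOne_one (t : ℕ) : hitOne t 1 = if t = 0 then 1 else 0 := by
  cases t <;> simp [hitOne]

lemma aw_zero : aw 0 = 0 := by simp [aw, hitOne]

lemma coeff_mul_range (F G : PowerSeries ℝ) (n : ℕ) :
    PowerSeries.coeff (R := ℝ) n (F * G) =
      ∑ s ∈ Finset.range (n+1), PowerSeries.coeff (R := ℝ) s F * PowerSeries.coeff (R := ℝ) (n - s) G := by
  rw [PowerSeries.coeff_mul, Finset.Nat.sum_antidiagonal_eq_sum_range_succ_mk]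

lemma key : ∀ t (k : ℕ), hitOne t (1 - (k : ℤ)) = PowerSeries.coeff (R := ℝ) t (Aps ^ k) := by
  intro t
  induction t using Nat.strong_induction_on with
  | _ t ih =>
    match t with
    | 0 =>
      intro k
      match k with
      | 0 => simp [hitOne]
      | (k + 1) =>
        have h1 : (1 : ℤ) - ((k : ℤ) + 1) ≠ 1 := by omega
        rw [show ((k : ℕ) + 1 : ℕ) = k + 1 from rfl]
        simp only [hitOne]
        rw [if_neg (by push_cast; omega)]
        rw [PowerSeries.coeff_zero_eq_constantCoeff, map_pow]
        have : constantCoeff (R := ℝ) Aps = 0 := by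
          simp [Aps, ← PowerSeries.coeff_zero_eq_constantCoeff, aw_zero]
        rw [this, zero_pow (by omega)]
    | (t + 1) =>
      intro k
      match k with
      | 0 =>
        simp [hitOne, PowerSeries.coeff_one]
      | (k + 1) =>
        -- LHS
        have lhs : hitOne (t + 1) (1 - ((k : ℤ) + 1)) =
            (1/2) * PowerSeries.coeff (R := ℝ) t (Aps ^ (k+1)) + (1/3) * PowerSeries.coeff (R := ℝ) t (Aps ^ k)
              + (1/6) * PowerSeries.coeff (R := ℝ) t (Aps ^ (k+2)) := by
          simp only [hitOne]
          rw [if_neg (by push_cast; omega)]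
          have e1 : (1 : ℤ) - ((k : ℤ) + 1) + 1 = 1 - (k : ℤ) := by ring
          have e2 : (1 : ℤ) - ((k : ℤ) + 1) - 1 = 1 - ((k : ℤ) + 2) := by ring
          rw [e1, e2]
          have h1 := ih t (by omega) (k + 1)
          have h2 := ih t (by omega) k
          have h3 := ih t (by omega) (k + 2)
          push_cast at h1 h2 h3
          rw [h1, h2, h3]
        push_cast
        rw [lhs]
        -- RHS
        have hb : ∀ u, u < t + 1 → hitOne u (-1) = PowerSeries.coeff (R := ℝ) u (Aps ^ 2) := by
          intro u hu
          have := ih u hu 2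
          norm_num at this
          convert this using 2
        have rhs : PowerSeries.coeff (R := ℝ) (t+1) (Aps ^ (k+1)) =
            ∑ u ∈ range (t+1), aw (u+1) * PowerSeries.coeff (R := ℝ) (t-u) (Aps ^ k) := by
          rw [show Aps ^ (k+1) = Aps * Aps ^ k by ring, coeff_mul_range, Finset.sum_range_succ']
          simp [Aps, aw_zero, Nat.succ_sub_succ]
        rw [rhs]
        have step : ∀ u ∈ range (t+1), aw (u+1) * PowerSeries.coeff (R := ℝ) (t-u) (Aps ^ k) =
            (1/2) * (aw u * PowerSeries.coeff (R := ℝ) (t-u) (Aps ^ k))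
            + (1/3) * (if u = 0 then PowerSeries.coeff (R := ℝ) (t-u) (Aps ^ k) else 0)
            + (1/6) * (PowerSeries.coeff (R := ℝ) u (Aps ^ 2) * PowerSeries.coeff (R := ℝ) (t-u) (Aps ^ k)) := by
          intro u hu
          have hau : aw (u+1) = (1/2) * aw u + (1/3) * (if u = 0 then 1 else 0)
              + (1/6) * PowerSeries.coeff (R := ℝ) u (Aps ^ 2) := by
            show hitOne (u+1) 0 = _
            simp only [hitOne]
            rw [if_neg (by norm_num)]
            rw [show (0:ℤ) + 1 = 1 by ring, show (0:ℤ) - 1 = -1 by ring,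
              hitOne_one, hb u (mem_range.mp hu)]
            rfl
          rw [hau]
          split <;> ring
        rw [Finset.sum_congr rfl step]
        rw [Finset.sum_add_distrib, Finset.sum_add_distrib, ← Finset.mul_sum, ← Finset.mul_sum,
          ← Finset.mul_sum]
        have c1 : ∑ u ∈ range (t+1), aw u * PowerSeries.coeff (R := ℝ) (t-u) (Aps ^ k)
            = PowerSeries.coeff (R := ℝ) t (Aps ^ (k+1)) := by
          rw [show Aps ^ (k+1) = Aps * Aps ^ k by ring, coeff_mul_range]
          simp [Aps]
        have c2 : (∑ u ∈ range (t+1), if u = 0 then PowerSeries.coeff (R := ℝ) (t-u) (Aps ^ k) else 0)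
            = PowerSeries.coeff (R := ℝ) t (Aps ^ k) := by
          rw [Finset.sum_ite_eq' (range (t+1)) 0 (fun u => PowerSeries.coeff (R := ℝ) (t-u) (Aps ^ k))]
          simp
        have c3 : ∑ u ∈ range (t+1), PowerSeries.coeff (R := ℝ) u (Aps ^ 2) * PowerSeries.coeff (R := ℝ) (t-u) (Aps ^ k)
            = PowerSeries.coeff (R := ℝ) t (Aps ^ (k+2)) := by
          rw [show Aps ^ (k+2) = Aps ^ 2 * Aps ^ k by ring, coeff_mul_range]
        rw [c1, c2, c3]

lemma aw_nonneg (t : ℕ) : 0 ≤ aw t := hitOne_nonneg t 0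

lemma b_eq (t : ℕ) : hitOne t (-1) = PowerSeries.coeff (R := ℝ) t (Aps ^ 2) := by
  have := key t 2
  norm_num at this
  convert this using 2

lemma aw_rec (t : ℕ) : aw (t+1) = (1/2) * aw t + (1/3) * (if t = 0 then 1 else 0)
    + (1/6) * PowerSeries.coeff (R := ℝ) t (Aps ^ 2) := by
  show hitOne (t+1) 0 = _
  simp only [hitOne]
  rw [if_neg (by norm_num), show (0:ℤ) + 1 = 1 by ring, show (0:ℤ) - 1 = -1 by ring,
    hitOne_one, b_eq]
  rfl

lemma b_conv (t : ℕ) : PowerSeries.coeff (R := ℝ) t (Aps ^ 2) = ∑ s ∈ range (t+1), aw s * aw (t-s) := by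
  rw [sq, coeff_mul_range]
  simp [Aps]

lemma b_nonneg (t : ℕ) : 0 ≤ PowerSeries.coeff (R := ℝ) t (Aps ^ 2) := by
  rw [← b_eq]; exact hitOne_nonneg t (-1)

noncomputable def uf (lam : ℝ) : ℕ → ℝ := fun t => hitOne t 0 * Real.exp (lam * t)

lemma uf_nonneg (lam : ℝ) (t : ℕ) : 0 ≤ uf lam t :=
  mul_nonneg (hitOne_nonneg t 0) (Real.exp_nonneg _)

lemma uf_zero (lam : ℝ) : uf lam 0 = 0 := by simp [uf, hitOne]

lemma w_eq (lam : ℝ) (t : ℕ) : PowerSeries.coeff (R := ℝ) t (Aps ^ 2) * Real.exp (lam * t)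
    = ∑ s ∈ range (t+1), uf lam s * uf lam (t-s) := by
  rw [b_conv, Finset.sum_mul]
  apply Finset.sum_congr rfl
  intro s hs
  have hst : s ≤ t := by simpa [Nat.lt_succ_iff] using hs
  have hc : ((t - s : ℕ) : ℝ) = (t : ℝ) - s := by
    push_cast [Nat.cast_sub hst]; ring
  simp only [uf, aw]
  rw [show lam * (t:ℝ) = lam * s + lam * ((t:ℝ) - s) by ring, Real.exp_add, hc]
  ring

lemma uf_succ (lam : ℝ) (t : ℕ) : uf lam (t+1) =
    Real.exp lam * ((1/2) * uf lam t + (1/3) * (if t = 0 then 1 else 0)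
      + (1/6) * ∑ s ∈ range (t+1), uf lam s * uf lam (t-s)) := by
  rw [← w_eq]
  show aw (t+1) * _ = _
  rw [aw_rec]
  push_cast
  rw [show lam * ((t:ℝ)+1) = lam * t + lam by ring, Real.exp_add]
  simp only [uf, aw]
  split_ifs with h
  · subst h; norm_num; ring
  · ring

lemma cauchy_partial (f g : ℕ → ℝ) : ∀ N, ∑ t ∈ range N, ∑ s ∈ range (t+1), f s * g (t-s)
    = ∑ i ∈ range N, f i * ∑ j ∈ range (N-i), g j := by
  intro N
  induction N with
  | zero => simp
  | succ N ihN =>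
    rw [Finset.sum_range_succ, ihN]
    have step : ∀ i ∈ range (N+1), f i * ∑ j ∈ range (N+1-i), g j
        = f i * ∑ j ∈ range (N-i), g j + f i * g (N-i) := by
      intro i hi
      have hi' : i ≤ N := by simpa [Nat.lt_succ_iff] using hi
      rw [show N+1-i = (N-i)+1 by omega, Finset.sum_range_succ]
      ring
    rw [Finset.sum_congr rfl step, Finset.sum_add_distrib,
      Finset.sum_range_succ (fun i => f i * ∑ j ∈ range (N-i), g j)]
    simp

lemma partial_le (lam : ℝ) (hq : Real.exp lam * (3 + 2*Real.sqrt 2) ≤ 6) (N : ℕ) :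
    ∑ t ∈ range N, uf lam t ≤ Real.sqrt 2 := by
  induction N with
  | zero => simp [Real.sqrt_nonneg]
  | succ N ih =>
    set S := ∑ t ∈ range N, uf lam t with hSdef
    have hS0 : 0 ≤ S := Finset.sum_nonneg fun t _ => uf_nonneg lam t
    have hW : ∑ t ∈ range N, ∑ s ∈ range (t+1), uf lam s * uf lam (t-s) ≤ S^2 := by
      rw [cauchy_partial]
      calc ∑ i ∈ range N, uf lam i * ∑ j ∈ range (N-i), uf lam j
          ≤ ∑ i ∈ range N, uf lam i * S := by
            apply Finset.sum_le_sum
            intro i _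
            apply mul_le_mul_of_nonneg_left _ (uf_nonneg lam i)
            exact Finset.sum_le_sum_of_subset_of_nonneg
              (Finset.range_subset_range.mpr (by omega)) (fun j _ _ => uf_nonneg lam j)
        _ = S * S := by rw [← Finset.sum_mul]
        _ = S^2 := (sq S).symm
    have hD : ∑ t ∈ range N, (if t = 0 then (1:ℝ) else 0) ≤ 1 := by
      rw [Finset.sum_ite_eq' (range N) 0 (fun _ => (1:ℝ))]
      split <;> norm_num
    have hkey : ∑ t ∈ range (N+1), uf lam t
        ≤ Real.exp lam * ((1/2)*S + (1/3) + (1/6)*S^2) := by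
      rw [Finset.sum_range_succ', uf_zero, add_zero]
      have : ∑ i ∈ range N, uf lam (i+1)
          = Real.exp lam * ((1/2)*S + (1/3)*(∑ t ∈ range N, (if t = 0 then (1:ℝ) else 0))
              + (1/6)*(∑ t ∈ range N, ∑ s ∈ range (t+1), uf lam s * uf lam (t-s))) := by
        rw [Finset.sum_congr rfl (fun i _ => uf_succ lam i), ← Finset.mul_sum]
        rw [Finset.sum_add_distrib, Finset.sum_add_distrib, ← Finset.mul_sum, ← Finset.mul_sum,
          ← Finset.mul_sum]
      rw [this]
      have h0 : (0:ℝ) ≤ Real.exp lam := Real.exp_nonneg lam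
      apply mul_le_mul_of_nonneg_left _ h0
      have := hW; have := hD
      nlinarith
    have h2 : (Real.sqrt 2)^2 = 2 := Real.sq_sqrt (by norm_num)
    have hs0 : (0:ℝ) ≤ Real.sqrt 2 := Real.sqrt_nonneg 2
    have hS2 : S^2 ≤ 2 := by nlinarith
    have e1 : (1/2)*S + (1/3) + (1/6)*S^2 ≤ Real.sqrt 2/2 + 2/3 := by nlinarith
    have e2 : Real.exp lam * (Real.sqrt 2/2 + 2/3) ≤ Real.sqrt 2 := by
      nlinarith [mul_le_mul_of_nonneg_right hq hs0, Real.exp_nonneg lam]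
    calc ∑ t ∈ range (N+1), uf lam t ≤ Real.exp lam * ((1/2)*S + (1/3) + (1/6)*S^2) := hkey
      _ ≤ Real.exp lam * (Real.sqrt 2/2 + 2/3) :=
          mul_le_mul_of_nonneg_left e1 (Real.exp_nonneg lam)
      _ ≤ Real.sqrt 2 := e2

/-- For the lazy walk on `ℤ` with `p(x,x+1)=1/3`, `p(x,x-1)=1/6`,
holding probability `1/2`, and `T'₁` the first hitting time of `1` from `0`:
for `λ ≤ log(6/(3+2√2))`, the Laplace transform `φ(λ) = E[e^{λT'₁}]` is finite and
satisfies `φ(λ) = e^λ(1/3 + φ(λ)²/6 + φ(λ)/2)`, whence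
`φ(λ) = (6e^{-λ}-3)/2 - √((6e^{-λ}-3)² - 8)/2`. -/
theorem stmt15 (lam : ℝ) (hlam : lam ≤ Real.log (6 / (3 + 2 * Real.sqrt 2))) :
    Summable (fun t : ℕ => hitOne t 0 * Real.exp (lam * t)) ∧
    (∑' t : ℕ, hitOne t 0 * Real.exp (lam * t)) =
      Real.exp lam * (1 / 3 + (∑' t : ℕ, hitOne t 0 * Real.exp (lam * t)) ^ 2 / 6 +
        (∑' t : ℕ, hitOne t 0 * Real.exp (lam * t)) / 2) ∧
    (∑' t : ℕ, hitOne t 0 * Real.exp (lam * t)) =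
      (6 * Real.exp (-lam) - 3) / 2 -
        Real.sqrt ((6 * Real.exp (-lam) - 3) ^ 2 - 8) / 2 := by
  have h32 : (0:ℝ) < 3 + 2 * Real.sqrt 2 := by positivity
  have hexp : Real.exp lam ≤ 6 / (3 + 2 * Real.sqrt 2) := by
    calc Real.exp lam ≤ Real.exp (Real.log (6 / (3 + 2 * Real.sqrt 2))) :=
          Real.exp_le_exp.mpr hlam
      _ = 6 / (3 + 2 * Real.sqrt 2) := Real.exp_log (by positivity)
  have hq : Real.exp lam * (3 + 2 * Real.sqrt 2) ≤ 6 := (le_div_iff₀ h32).mp hexp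
  have hsum : Summable (uf lam) :=
    summable_of_sum_range_le (uf_nonneg lam) (partial_le lam hq)
  have hnorm : Summable (fun t => ‖uf lam t‖) := by
    have : (fun t => ‖uf lam t‖) = uf lam :=
      funext fun t => Real.norm_of_nonneg (uf_nonneg lam t)
    rw [this]; exact hsum
  set φ := ∑' t, uf lam t with hφdef
  have hφle : φ ≤ Real.sqrt 2 :=
    Summable.tsum_le_of_sum_range_le hsum (partial_le lam hq)
  have hφ0 : 0 ≤ φ := tsum_nonneg (uf_nonneg lam)
  -- Cauchy product
  set w : ℕ → ℝ := fun t => ∑ s ∈ range (t+1), uf lam s * uf lam (t-s) with hwdef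
  have hwsum : Summable w :=
    summable_sum_mul_range_of_summable_norm' hnorm hsum hnorm hsum
  have hφ2 : φ * φ = ∑' t, w t :=
    tsum_mul_tsum_eq_tsum_sum_range_of_summable_norm' hnorm hsum hnorm hsum
  have hδsum : Summable (fun t : ℕ => if t = 0 then (1:ℝ) else 0) :=
    (hasSum_ite_eq 0 1).summable
  have hδtsum : (∑' t : ℕ, if t = 0 then (1:ℝ) else 0) = 1 := (hasSum_ite_eq 0 1).tsum_eq
  -- the fixed point equation
  have heq : φ = Real.exp lam * ((1/2)*φ + 1/3 + (1/6)*(φ*φ)) := by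
    have h1 : φ = uf lam 0 + ∑' t, uf lam (t+1) := Summable.tsum_eq_zero_add hsum
    rw [uf_zero, zero_add] at h1
    have h2 : ∑' t, uf lam (t+1)
        = ∑' t, Real.exp lam * ((1/2) * uf lam t + (1/3) * (if t = 0 then (1:ℝ) else 0)
            + (1/6) * w t) := by
      exact tsum_congr fun t => uf_succ lam t
    rw [h2, tsum_mul_left] at h1
    rw [Summable.tsum_add (((hsum.mul_left _).add (hδsum.mul_left _))) (hwsum.mul_left _)] at h1
    rw [Summable.tsum_add (hsum.mul_left _) (hδsum.mul_left _)] at h1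
    rw [tsum_mul_left, tsum_mul_left, tsum_mul_left, hδtsum] at h1
    rw [← hφdef, ← hφ2] at h1
    linear_combination h1
  have hconv : (∑' t : ℕ, hitOne t 0 * Real.exp (lam * t)) = φ := rfl
  refine ⟨hsum, ?_, ?_⟩
  · rw [hconv]
    linear_combination heq
  · rw [hconv]
    set c : ℝ := 6 * Real.exp (-lam) - 3 with hcdef
    have hEE : Real.exp (-lam) * Real.exp lam = 1 := by
      rw [← Real.exp_add]; simp
    have hquad : φ^2 - c * φ + 2 = 0 := by
      rw [hcdef]
      linear_combination (-6 * Real.exp (-lam)) * heq - (2 + φ^2 + 3*φ) * hEE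
    have hc : 2 * Real.sqrt 2 ≤ c := by
      rw [hcdef]
      nlinarith [hq, Real.exp_pos lam, hEE]
    have h2φ : 2 * φ ≤ c := by
      have : 2 * φ ≤ 2 * Real.sqrt 2 := by linarith
      linarith
    have hsq : c^2 - 8 = (c - 2*φ)^2 := by linear_combination (-4) * hquad
    rw [hsq, Real.sqrt_sq (by linarith : (0:ℝ) ≤ c - 2*φ)]
    ring
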